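/- For every orthonormal pair of vectors x, y in ℝ⁷, the triple (x, y, x × y) is orthonormal and φ(x, y, x × y) = 1; that is, every oriented 2-plane in ℝ⁷ extends to an associative 3-plane by adjoining the cross product of an oriented orthonormal basis. -/

import Mathlib

open RealInnerProductSpace

noncomputable section

/-- `ℝ⁷` with the Euclidean inner product. -/
abbrev R7 := EuclideanSpace ℝ (Fin 7)

/-- The standard basis vectors `e₁, …, e₇` of `ℝ⁷` (0-indexed). -/
def stdBasis (i : Fin 7) : R7 := EuclideanSpace.single i 1

/-- `dx_i ∧ dx_j ∧ dx_k` evaluated on the triple `(x, y, z)` (0-indexed). -/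
def dx3 (i j k : Fin 7) (x y z : R7) : ℝ :=
  x i * (y j * z k - y k * z j) - x j * (y i * z k - y k * z i)
    + x k * (y i * z j - y j * z i)

/-- The associative calibration
`φ = dx₁₂₃ + dx₁₄₅ + dx₁₆₇ + dx₂₄₆ − dx₂₅₇ − dx₃₄₇ − dx₃₅₆` (0-indexed here). -/
def phi (x y z : R7) : ℝ :=
  dx3 0 1 2 x y z + dx3 0 3 4 x y z + dx3 0 5 6 x y z + dx3 1 3 5 x y z
    - dx3 1 4 6 x y z - dx3 2 3 6 x y z - dx3 2 4 5 x y z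

/-- The cross product on `ℝ⁷`: the unique vector with `⟪x × y, z⟫ = φ(x,y,z)` for all `z`. -/
def cross (x y : R7) : R7 := ∑ i, phi x y (stdBasis i) • stdBasis i

lemma crossApply7 (x y : R7) (j : Fin 7) : cross x y j = phi x y (stdBasis j) := by
  unfold cross
  rw [show ((∑ i, phi x y (stdBasis i) • stdBasis i) j)
      = ∑ i, (phi x y (stdBasis i) • stdBasis i) j from by rw [WithLp.ofLp_sum]; exact Finset.sum_apply j _ _]
  simp [stdBasis, EuclideanSpace.single_apply, Finset.sum_ite_eq]

lemma comp0 (x y : R7) : cross x y 0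
    = x 1 * y 2 - x 2 * y 1 + x 3 * y 4 - x 4 * y 3 + x 5 * y 6 - x 6 * y 5 := by
  rw [crossApply7]; simp [phi, dx3, stdBasis, EuclideanSpace.single_apply]; ring
lemma comp1 (x y : R7) : cross x y 1
    = -(x 0 * y 2) + x 2 * y 0 + x 3 * y 5 - x 4 * y 6 - x 5 * y 3 + x 6 * y 4 := by
  rw [crossApply7]; simp [phi, dx3, stdBasis, EuclideanSpace.single_apply]; ring
lemma comp2 (x y : R7) : cross x y 2
    = x 0 * y 1 - x 1 * y 0 - x 3 * y 6 - x 4 * y 5 + x 5 * y 4 + x 6 * y 3 := by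
  rw [crossApply7]; simp [phi, dx3, stdBasis, EuclideanSpace.single_apply]; ring
lemma comp3 (x y : R7) : cross x y 3
    = -(x 0 * y 4) - x 1 * y 5 + x 2 * y 6 + x 4 * y 0 + x 5 * y 1 - x 6 * y 2 := by
  rw [crossApply7]; simp [phi, dx3, stdBasis, EuclideanSpace.single_apply]; ring
lemma comp4 (x y : R7) : cross x y 4
    = x 0 * y 3 + x 1 * y 6 + x 2 * y 5 - x 3 * y 0 - x 5 * y 2 - x 6 * y 1 := by
  rw [crossApply7]; simp [phi, dx3, stdBasis, EuclideanSpace.single_apply]; ring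
lemma comp5 (x y : R7) : cross x y 5
    = -(x 0 * y 6) + x 1 * y 3 - x 2 * y 4 - x 3 * y 1 + x 4 * y 2 + x 6 * y 0 := by
  rw [crossApply7]; simp [phi, dx3, stdBasis, EuclideanSpace.single_apply]; ring
lemma comp6 (x y : R7) : cross x y 6
    = x 0 * y 5 - x 1 * y 4 - x 2 * y 3 + x 3 * y 2 + x 4 * y 1 - x 5 * y 0 := by
  rw [crossApply7]; simp [phi, dx3, stdBasis, EuclideanSpace.single_apply]; ring

lemma inner7 (x y : R7) : ⟪x, y⟫ = ∑ i, x i * y i := by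
  simp [PiLp.inner_apply, RCLike.inner_apply, mul_comm]

lemma key1 (x y : R7) : ⟪x, cross x y⟫ = 0 := by
  rw [inner7]
  simp only [Fin.sum_univ_seven, comp0, comp1, comp2, comp3, comp4, comp5, comp6]
  ring
lemma key2 (x y : R7) : ⟪y, cross x y⟫ = 0 := by
  rw [inner7]
  simp only [Fin.sum_univ_seven, comp0, comp1, comp2, comp3, comp4, comp5, comp6]
  ring
lemma key3 (x y : R7) : ⟪cross x y, cross x y⟫ = ⟪x, x⟫ * ⟪y, y⟫ - ⟪x, y⟫ ^ 2 := by
  simp only [inner7, Fin.sum_univ_seven, comp0, comp1, comp2, comp3, comp4, comp5, comp6]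
  ring
lemma key4 (x y : R7) : phi x y (cross x y) = ⟪x, x⟫ * ⟪y, y⟫ - ⟪x, y⟫ ^ 2 := by
  simp only [inner7, Fin.sum_univ_seven, phi, dx3,
    comp0, comp1, comp2, comp3, comp4, comp5, comp6]
  ring

/-- For every orthonormal pair `x, y` in `ℝ⁷`, the triple
`(x, y, x × y)` is orthonormal and `φ(x, y, x × y) = 1`: every oriented 2-plane in `ℝ⁷`
extends to an associative 3-plane by adjoining the cross product. -/
theorem extend_to_associative (x y : R7)
    (hx : ‖x‖ = 1) (hy : ‖y‖ = 1) (hxy : ⟪x, y⟫ = 0) :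
    ‖cross x y‖ = 1 ∧ ⟪x, cross x y⟫ = 0 ∧ ⟪y, cross x y⟫ = 0 ∧
    phi x y (cross x y) = 1 := by
  have hxx : ⟪x, x⟫ = 1 := by rw [real_inner_self_eq_norm_mul_norm, hx]; ring
  have hyy : ⟪y, y⟫ = 1 := by rw [real_inner_self_eq_norm_mul_norm, hy]; ring
  have hcc : ⟪cross x y, cross x y⟫ = 1 := by rw [key3, hxx, hyy, hxy]; ring
  refine ⟨?_, key1 x y, key2 x y, by rw [key4, hxx, hyy, hxy]; ring⟩
  rw [real_inner_self_eq_norm_mul_norm] at hcc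
  nlinarith [norm_nonneg (cross x y)]
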